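/- Let P be a set of n points in ℝ^d, let k ≥ 1 divide n, let (c_i, r_i, P_i), i = 1, …, n/k, be a 2-approximate quorum clustering of P with parameter k, let ε ∈ (0,1], let q ∈ ℝ^d, and write D = d_k(P,q) and q̂ = (q,0) ∈ ℝ^{d+1}. Suppose an index a satisfies B(c_a, r_a) ∩ B(q, D) ≠ ∅ and r_a < εD/4, and suppose an index j satisfies ‖q̂ − (c_j, r_j)‖ ≤ (1 + ε/8) · ‖q̂ − (c_a, r_a)‖ (Euclidean norm in ℝ^{d+1}) and r_j < εD/4. Then D ≤ ‖q − c_j‖ + r_j ≤ (1 + ε) · D. -/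

import Mathlib

open Metric

/-- The `k`-th nearest neighbor distance of `q` to the finite point set `P`. -/
noncomputable def kthNNDist {d : ℕ} (k : ℕ) (P : Finset (EuclideanSpace ℝ (Fin d)))
    (q : EuclideanSpace ℝ (Fin d)) : ℝ :=
  sInf {r : ℝ | 0 ≤ r ∧ k ≤ (P.filter fun p => dist q p ≤ r).card}

/-- `rad_k Q`: the radius of the smallest closed ball containing at least `k` points of `Q`. -/
noncomputable def radk {d : ℕ} (k : ℕ) (Q : Finset (EuclideanSpace ℝ (Fin d))) : ℝ :=
  sInf (Set.range fun q => kthNNDist k Q q)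

/-- Lift a point `p ∈ ℝ^d` together with a real `t` to the point `(p, t) ∈ ℝ^{d+1}`. -/
noncomputable def liftPt {d : ℕ} (p : EuclideanSpace ℝ (Fin d)) (t : ℝ) :
    EuclideanSpace ℝ (Fin (d + 1)) :=
  WithLp.toLp 2 (Fin.snoc (α := fun _ => ℝ) (WithLp.ofLp p) t)

lemma liftPt_dist_sq {d : ℕ} (p p' : EuclideanSpace ℝ (Fin d)) (s t : ℝ) :
    dist (liftPt p s) (liftPt p' t) ^ 2 = dist p p' ^ 2 + (s - t) ^ 2 := by
  have h1 : dist (liftPt p s) (liftPt p' t) ^ 2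
      = ∑ i : Fin (d+1), dist (liftPt p s i) (liftPt p' t i) ^ 2 := by
    rw [EuclideanSpace.dist_eq, Real.sq_sqrt (by positivity)]
  have h2 : dist p p' ^ 2 = ∑ i : Fin d, dist (p i) (p' i) ^ 2 := by
    rw [EuclideanSpace.dist_eq, Real.sq_sqrt (by positivity)]
  rw [h1, h2, Fin.sum_univ_castSucc]
  simp [liftPt, Real.dist_eq, sq_abs]

lemma kthNNDist_nonneg {d k : ℕ} (P : Finset (EuclideanSpace ℝ (Fin d)))
    (q : EuclideanSpace ℝ (Fin d)) : 0 ≤ kthNNDist k P q :=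
  Real.sInf_nonneg fun _ hx => hx.1

lemma radk_nonneg {d k : ℕ} (Q : Finset (EuclideanSpace ℝ (Fin d))) : 0 ≤ radk k Q :=
  Real.sInf_nonneg (by rintro x ⟨y, rfl⟩; exact kthNNDist_nonneg Q y)

lemma kthNNDist_le {d k : ℕ} (P : Finset (EuclideanSpace ℝ (Fin d)))
    (q : EuclideanSpace ℝ (Fin d))
    (x : ℝ) (hx0 : 0 ≤ x) (hx : k ≤ (P.filter fun p => dist q p ≤ x).card) :
    kthNNDist k P q ≤ x :=
  csInf_le ⟨0, fun _ hy => hy.1⟩ ⟨hx0, hx⟩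

open Classical in
/-- The general case of the correctness proof: if `a` is an index whose ball meets
`B(q, D)` and has radius `< εD/4`, and `j` is a `(1 + ε/8)`-approximate nearest neighbor
of `q̂ = (q, 0)` among the lifted balls with `r j < εD/4`, then
`D ≤ ‖q - c_j‖ + r_j ≤ (1 + ε) D`, where `D = d_k(P, q)`. -/
theorem general_case_approx {d n k : ℕ} (hk : 1 ≤ k) (hdvd : k ∣ n)
    (hn : 0 < n) (P : Finset (EuclideanSpace ℝ (Fin d))) (hP : P.card = n)
    (c : Fin (n / k) → EuclideanSpace ℝ (Fin d)) (r : Fin (n / k) → ℝ)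
    (Q : Fin (n / k) → Finset (EuclideanSpace ℝ (Fin d)))
    (hdisj : ∀ i j, i ≠ j → Disjoint (Q i) (Q j))
    (hunion : Finset.univ.biUnion Q = P)
    (hcard : ∀ i, (Q i).card = k)
    (hcover : ∀ i, ↑(Q i) ⊆ closedBall (c i) (r i))
    (happrox : ∀ i,
      r i / 2 ≤ radk k (P \ (Finset.univ.filter fun j => j < i).biUnion Q) ∧
      radk k (P \ (Finset.univ.filter fun j => j < i).biUnion Q) ≤ r i)
    (ε : ℝ) (hε0 : 0 < ε) (hε1 : ε ≤ 1)
    (q : EuclideanSpace ℝ (Fin d)) (D : ℝ) (hD : D = kthNNDist k P q)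
    (a j : Fin (n / k))
    (ha1 : (closedBall (c a) (r a) ∩ closedBall q D).Nonempty)
    (ha2 : r a < ε * D / 4)
    (hj1 : dist (liftPt q 0) (liftPt (c j) (r j)) ≤
      (1 + ε / 8) * dist (liftPt q 0) (liftPt (c a) (r a)))
    (hj2 : r j < ε * D / 4) :
    D ≤ dist q (c j) + r j ∧ dist q (c j) + r j ≤ (1 + ε) * D := by
  have hD0 : 0 ≤ D := hD ▸ kthNNDist_nonneg P q
  have hr0 : ∀ i, 0 ≤ r i := fun i =>
    le_trans (radk_nonneg _) (happrox i).2
  have hQP : ∀ i, Q i ⊆ P := fun i => by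
    rw [← hunion]; exact Finset.subset_biUnion_of_mem Q (Finset.mem_univ i)
  -- lower bound
  have hlow : D ≤ dist q (c j) + r j := by
    rw [hD]
    refine kthNNDist_le P q _ (add_nonneg dist_nonneg (hr0 j)) ?_
    calc k = (Q j).card := (hcard j).symm
    _ ≤ _ := by
        refine Finset.card_le_card fun p hp => Finset.mem_filter.2 ⟨hQP j hp, ?_⟩
        have h1 : dist p (c j) ≤ r j := mem_closedBall.1 (hcover j hp)
        have h2 := dist_triangle q (c j) p
        rw [dist_comm (c j) p] at h2
        linarith
  refine ⟨hlow, ?_⟩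
  -- upper bound
  obtain ⟨x, hx1, hx2⟩ := ha1
  rw [mem_closedBall] at hx1 hx2
  have hqa : dist q (c a) ≤ D + r a := by
    have := dist_triangle q x (c a)
    rw [dist_comm q x] at this
    linarith
  set A := dist (liftPt q 0) (liftPt (c a) (r a)) with hA
  set J := dist (liftPt q 0) (liftPt (c j) (r j)) with hJ
  have hA0 : 0 ≤ A := dist_nonneg
  have hJ0 : 0 ≤ J := dist_nonneg
  have hA2 : A ^ 2 = dist q (c a) ^ 2 + r a ^ 2 := by
    rw [hA, liftPt_dist_sq]; ring_nf
  have hJ2 : J ^ 2 = dist q (c j) ^ 2 + r j ^ 2 := by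
    rw [hJ, liftPt_dist_sq]; ring_nf
  have hstep1 : A ≤ dist q (c a) + r a := by
    nlinarith [dist_nonneg (x := q) (y := c a), hr0 a, sq_nonneg (A - (dist q (c a) + r a))]
  have hstep2 : dist q (c j) ≤ J := by
    nlinarith [dist_nonneg (x := q) (y := c j), sq_nonneg (r j)]
  have hqj : dist q (c j) ≤ (1 + ε / 8) * (D + 2 * r a) := by
    have := hj1
    nlinarith [hr0 a]
  nlinarith [hr0 a, mul_nonneg hε0.le hD0, mul_nonneg (mul_nonneg hε0.le hε0.le) hD0]
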